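/- Let H ⊊ K be a nonempty proper subset, f : K → ℝ, and let L_H be the K×K matrix whose rows indexed by x ∈ H equal the corresponding rows of L and whose rows indexed by x ∉ H are zero. Set f_H(x) = f(x) for x ∈ H and f_H(x) = 0 for x ∉ H. Then V_H(x) = ∫₀^∞ (e^{t L_H} f_H)(x) dt converges for every x, and V_H is the unique function on K satisfying LV_H(x) + f(x) = 0 for all x ∈ H and V_H(x) = 0 for all x ∉ H. -/

import Mathlib

open scoped Classical

/-- The backward generator `L` of the Markov jump process with rates `k`:
`L x y = k x y` for `x ≠ y` and `L x x = -∑_{z ≠ x} k x z`. -/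
noncomputable def gen {K : Type*} [Fintype K] [DecidableEq K] (k : K → K → ℝ) :
    Matrix K K ℝ :=
  Matrix.of fun x y => if x = y then -∑ z ∈ Finset.univ.erase x, k x z else k x y

/-- Strong connectivity (irreducibility) of the digraph with an arc `(x,y)` whenever
`k x y > 0`. -/
def StronglyConnected {K : Type*} (k : K → K → ℝ) : Prop :=
  ∀ x y : K, Relation.ReflTransGen (fun a b => 0 < k a b) x y

/-- The generator `L_H` of the stopped process: rows indexed by `x ∈ H` agree with those of
`L`, rows indexed by `x ∉ H` vanish. -/
noncomputable def genH {K : Type*} [Fintype K] [DecidableEq K] (k : K → K → ℝ)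
    (H : Finset K) : Matrix K K ℝ :=
  Matrix.of fun x y => if x ∈ H then gen k x y else 0

section StoppedAux

open NormedSpace MeasureTheory Matrix Finset

variable {K : Type*} [Fintype K] [DecidableEq K]

attribute [local instance] Matrix.linftyOpNormedRing Matrix.linftyOpNormedAlgebra

variable {K : Type*} [Fintype K] [DecidableEq K]

noncomputable def entryCLM (x y : K) : Matrix K K ℝ →L[ℝ] ℝ :=
  { toLinearMap :=
    { toFun := fun M => M x y
      map_add' := fun _ _ => rfl
      map_smul' := fun _ _ => rfl }
    cont := (continuous_apply y).comp (continuous_apply x) }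

lemma exp_entry (B : Matrix K K ℝ) (x y : K) :
    exp B x y = ∑' n : ℕ, ((n.factorial : ℝ)⁻¹) * (B ^ n) x y := by
  have hsum := expSeries_summable' (𝕂 := ℝ) B
  have h := (entryCLM x y).map_tsum hsum
  rw [exp_eq_tsum ℝ]
  simpa [show ∀ M : Matrix K K ℝ, entryCLM x y M = M x y from fun _ => rfl, smul_eq_mul] using h

lemma entry_summable (B : Matrix K K ℝ) (x y : K) :
    Summable fun n : ℕ => ((n.factorial : ℝ)⁻¹) * (B ^ n) x y := by
  have hsum := expSeries_summable' (𝕂 := ℝ) B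
  have := (hsum.hasSum.mapL (entryCLM x y)).summable
  simpa [show ∀ M : Matrix K K ℝ, entryCLM x y M = M x y from fun _ => rfl, smul_eq_mul] using this

lemma pow_entry_nonneg {B : Matrix K K ℝ} (hB : ∀ x y, 0 ≤ B x y) (n : ℕ) :
    ∀ x y, 0 ≤ (B ^ n) x y := by
  induction n with
  | zero => intro x y; simp [Matrix.one_apply]; positivity
  | succ n ih =>
    intro x y
    rw [pow_succ, Matrix.mul_apply]
    exact Finset.sum_nonneg fun z _ => mul_nonneg (ih x z) (hB z y)

lemma exp_entry_nonneg {B : Matrix K K ℝ} (hB : ∀ x y, 0 ≤ B x y) (x y : K) :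
    0 ≤ exp B x y := by
  rw [exp_entry]
  exact tsum_nonneg fun n => mul_nonneg (by positivity) (pow_entry_nonneg hB n x y)

lemma le_exp_entry {B : Matrix K K ℝ} (hB : ∀ x y, 0 ≤ B x y) (m : ℕ) (x y : K) :
    ((m.factorial : ℝ)⁻¹) * (B ^ m) x y ≤ exp B x y := by
  rw [exp_entry]
  exact Summable.le_tsum (entry_summable B x y) m
    (fun n _ => mul_nonneg (by positivity) (pow_entry_nonneg hB n x y))

lemma exp_smul_one (r : ℝ) :
    exp (r • (1 : Matrix K K ℝ)) = Real.exp r • (1 : Matrix K K ℝ) := by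
  have h1 : r • (1 : Matrix K K ℝ) = Matrix.diagonal (fun _ => r) := by
    ext i j; by_cases h : i = j <;> simp [Matrix.diagonal, Matrix.one_apply, h]
  rw [h1, Matrix.exp_diagonal]
  ext i j
  by_cases h : i = j <;>
    simp [Matrix.diagonal, Matrix.one_apply, h, Pi.exp_def, Real.exp_eq_exp_ℝ]

lemma exp_mulVec_of_mulVec_eq_zero (B : Matrix K K ℝ) (v : K → ℝ)
    (h : B.mulVec v = 0) : (exp B).mulVec v = v := by
  have hsum := expSeries_summable' (𝕂 := ℝ) B
  let ψ : Matrix K K ℝ →ₗ[ℝ] (K → ℝ) :=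
    { toFun := fun M => M.mulVec v
      map_add' := fun M N => Matrix.add_mulVec M N v
      map_smul' := fun c M => Matrix.smul_mulVec c M v }
  let ψcl : Matrix K K ℝ →L[ℝ] (K → ℝ) := ⟨ψ, LinearMap.continuous_of_finiteDimensional _⟩
  have hpow : ∀ n : ℕ, n ≠ 0 → (B ^ n).mulVec v = 0 := by
    intro n hn
    obtain ⟨m, rfl⟩ := Nat.exists_eq_succ_of_ne_zero hn
    rw [pow_succ, ← Matrix.mulVec_mulVec, h, Matrix.mulVec_zero]
  have h2 := ψcl.map_tsum hsum
  rw [exp_eq_tsum ℝ]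
  show ψcl (∑' n : ℕ, ((n.factorial : ℝ)⁻¹) • B ^ n) = v
  rw [h2]
  rw [tsum_eq_single 0]
  · show ((Nat.factorial 0 : ℝ)⁻¹ • B ^ 0).mulVec v = v
    simp [Matrix.one_mulVec]
  · intro n hn
    show ((n.factorial : ℝ)⁻¹ • B ^ n).mulVec v = 0
    rw [Matrix.smul_mulVec, hpow n hn, smul_zero]

variable {k : K → K → ℝ} {H : Finset K}

lemma gen_row_sum (x : K) : ∑ y, gen k x y = 0 := by
  rw [← Finset.add_sum_erase Finset.univ _ (Finset.mem_univ x)]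
  have h1 : gen k x x = -∑ z ∈ Finset.univ.erase x, k x z := by simp [gen]
  have h2 : ∑ y ∈ Finset.univ.erase x, gen k x y = ∑ y ∈ Finset.univ.erase x, k x y := by
    refine Finset.sum_congr rfl fun y hy => ?_
    have : x ≠ y := fun h => (Finset.mem_erase.mp hy).1 h.symm
    simp [gen, this]
  rw [h1, h2]; ring

lemma genH_row_sum (x : K) : ∑ y, genH k H x y = 0 := by
  by_cases hx : x ∈ H
  · simp only [genH, Matrix.of_apply, hx, if_true]; exact gen_row_sum x
  · simp [genH, hx]

lemma genH_mulVec_one : (genH k H).mulVec (fun _ => 1) = 0 := by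
  funext x
  simp [Matrix.mulVec, dotProduct, genH_row_sum (k := k) (H := H) x]

lemma exp_genH_row_sum (t : ℝ) (x : K) :
    ∑ y, exp (t • genH k H) x y = 1 := by
  have h : (t • genH k H).mulVec (fun _ => 1) = 0 := by
    rw [Matrix.smul_mulVec, genH_mulVec_one, smul_zero]
  have := congrFun (exp_mulVec_of_mulVec_eq_zero _ _ h) x
  simpa [Matrix.mulVec, dotProduct] using this

lemma row_zero_pow {B : Matrix K K ℝ} {x : K} (hx : ∀ y, B x y = 0) :
    ∀ n : ℕ, n ≠ 0 → ∀ y, (B ^ n) x y = 0 := by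
  intro n hn y
  obtain ⟨m, rfl⟩ := Nat.exists_eq_succ_of_ne_zero hn
  rw [pow_succ', Matrix.mul_apply]
  simp [hx]

lemma exp_row_notMem (t : ℝ) {x : K} (hx : x ∉ H) (y : K) :
    exp (t • genH k H) x y = if x = y then 1 else 0 := by
  have hrow : ∀ z, (t • genH k H) x z = 0 := by
    intro z; simp [genH, hx]
  rw [exp_entry, tsum_eq_single 0]
  · simp [Matrix.one_apply]
  · intro n hn
    rw [row_zero_pow hrow n hn y, mul_zero]

variable (k) in
noncomputable def cN : ℝ := (∑ x, ∑ z ∈ Finset.univ.erase x, k x z) + 1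

variable (k H) in
noncomputable def NM : Matrix K K ℝ := genH k H + cN k • 1

section withk
variable (hk : ∀ x y : K, x ≠ y → 0 ≤ k x y)
include hk

lemma row_sum_nonneg (x : K) : 0 ≤ ∑ z ∈ Finset.univ.erase x, k x z :=
  Finset.sum_nonneg fun z hz => hk x z fun h => (Finset.mem_erase.mp hz).1 h.symm

lemma row_sum_le (x : K) : ∑ z ∈ Finset.univ.erase x, k x z ≤ cN k - 1 := by
  have := Finset.single_le_sum (f := fun x => ∑ z ∈ Finset.univ.erase x, k x z)
    (fun i _ => row_sum_nonneg hk i) (Finset.mem_univ x)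
  simp only [cN]; linarith

lemma cN_pos : (0:ℝ) < cN k := by
  have h : 0 ≤ ∑ x, ∑ z ∈ Finset.univ.erase x, k x z :=
    Finset.sum_nonneg fun i _ => row_sum_nonneg hk i
  simp only [cN]; linarith

lemma NM_nonneg (x y : K) : 0 ≤ NM k H x y := by
  have hle := row_sum_le hk x
  have hnn := row_sum_nonneg hk x
  by_cases hx : x ∈ H
  · by_cases hxy : x = y
    · subst hxy; simp only [NM, genH, Matrix.add_apply, Matrix.of_apply, hx, if_true, gen,
        Matrix.smul_apply, Matrix.one_apply_eq, smul_eq_mul, mul_one, if_pos rfl]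
      linarith
    · simp only [NM, genH, Matrix.add_apply, Matrix.of_apply, hx, if_true, gen,
        Matrix.smul_apply, Matrix.one_apply_ne hxy, smul_eq_mul, mul_zero, if_neg hxy, add_zero]
      exact hk x y hxy
  · by_cases hxy : x = y
    · subst hxy
      simp only [NM, genH, Matrix.add_apply, Matrix.of_apply, hx, if_false,
        Matrix.smul_apply, Matrix.one_apply_eq, smul_eq_mul, mul_one, zero_add]
      linarith
    · simp [NM, genH, hx, Matrix.one_apply_ne hxy]

lemma NM_diag_pos (x : K) : 0 < NM k H x x := by
  have hle := row_sum_le hk x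
  have hc := cN_pos hk
  by_cases hx : x ∈ H
  · simp only [NM, genH, Matrix.add_apply, Matrix.of_apply, hx, if_true, gen,
      Matrix.smul_apply, Matrix.one_apply_eq, smul_eq_mul, mul_one, if_pos rfl]
    linarith
  · simp only [NM, genH, Matrix.add_apply, Matrix.of_apply, hx, if_false,
      Matrix.smul_apply, Matrix.one_apply_eq, smul_eq_mul, mul_one, zero_add]
    linarith

omit hk in
lemma NM_offdiag {x y : K} (hx : x ∈ H) (hxy : x ≠ y) : NM k H x y = k x y := by
  simp [NM, genH, gen, hx, hxy, Matrix.one_apply_ne hxy]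

end withk

lemma genH_decomp (t : ℝ) :
    exp (t • genH k H) = Real.exp (-(t * cN k)) • exp (t • NM k H) := by
  have hsplit : t • genH k H = t • NM k H + (-(t * cN k)) • (1 : Matrix K K ℝ) := by
    simp only [NM, smul_add, smul_smul]
    module
  rw [hsplit, Matrix.exp_add_of_commute _ _ (((Commute.one_right _).smul_right _))]
  rw [exp_smul_one, mul_smul_comm, mul_one]

section withk2
variable (hk : ∀ x y : K, x ≠ y → 0 ≤ k x y)
include hk

lemma exp_genH_nonneg {t : ℝ} (ht : 0 ≤ t) (x y : K) :
    0 ≤ exp (t • genH k H) x y := by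
  rw [genH_decomp]
  have hNM : ∀ a b, 0 ≤ (t • NM k H) a b := fun a b =>
    mul_nonneg ht (NM_nonneg hk a b)
  have := exp_entry_nonneg hNM x y
  simp only [Matrix.smul_apply, smul_eq_mul]
  positivity

lemma exp_genH_entry_pos {t : ℝ} (ht : 0 < t) {x z : K} {m : ℕ}
    (hm : 0 < (NM k H ^ m) x z) : 0 < exp (t • genH k H) x z := by
  rw [genH_decomp]
  have hNM : ∀ a b, 0 ≤ (t • NM k H) a b := fun a b =>
    mul_nonneg ht.le (NM_nonneg hk a b)
  have hle := le_exp_entry hNM m x z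
  have hpow : ((t • NM k H) ^ m) x z = t ^ m * (NM k H ^ m) x z := by
    rw [smul_pow]; simp
  rw [hpow] at hle
  have h1 : 0 < (m.factorial : ℝ)⁻¹ * (t ^ m * (NM k H ^ m) x z) := by positivity
  simp only [Matrix.smul_apply, smul_eq_mul]
  have := Real.exp_pos (-(t * cN k))
  nlinarith

lemma exp_genH_diag_pos {t : ℝ} (ht : 0 ≤ t) (x : K) :
    0 < exp (t • genH k H) x x := by
  rcases eq_or_lt_of_le ht with h | h
  · rw [← h, zero_smul, exp_zero]
    simp [Matrix.one_apply]
  · exact exp_genH_entry_pos hk h (m := 0) (by simp [Matrix.one_apply])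

end withk2

lemma pow_diag_pos {B : Matrix K K ℝ} (hB : ∀ x y, 0 ≤ B x y)
    (hdiag : ∀ x, 0 < B x x) (m : ℕ) (x : K) : 0 < (B ^ m) x x := by
  induction m with
  | zero => simp [Matrix.one_apply]
  | succ m ih =>
    rw [pow_succ, Matrix.mul_apply]
    have hterm : (B ^ m) x x * B x x ≤ ∑ z, (B ^ m) x z * B z x :=
      Finset.single_le_sum (f := fun z => (B ^ m) x z * B z x)
        (fun z _ => mul_nonneg (pow_entry_nonneg hB m x z) (hB z x)) (Finset.mem_univ x)
    nlinarith [hdiag x]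

lemma pow_pos_of_walk {B : Matrix K K ℝ} (hB : ∀ x y, 0 ≤ B x y)
    (hdiag : ∀ x, 0 < B x x) {x z : K}
    (h : Relation.ReflTransGen (fun a b => 0 < B a b) x z) :
    ∃ ℓ : ℕ, ∀ m, ℓ ≤ m → 0 < (B ^ m) x z := by
  induction h with
  | refl => exact ⟨0, fun m _ => pow_diag_pos hB hdiag m x⟩
  | @tail b c hxb hbc ih =>
    obtain ⟨ℓ, hℓ⟩ := ih
    refine ⟨ℓ + 1, fun m hm => ?_⟩
    obtain ⟨m', rfl⟩ := Nat.exists_eq_add_of_le hm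
    have h1 : 0 < (B ^ (ℓ + m')) x b := hℓ _ (Nat.le_add_right _ _)
    have heq : ℓ + 1 + m' = (ℓ + m') + 1 := by ring
    rw [heq, pow_succ, Matrix.mul_apply]
    have hterm : (B ^ (ℓ + m')) x b * B b c ≤ ∑ w, (B ^ (ℓ + m')) x w * B w c :=
      Finset.single_le_sum (f := fun w => (B ^ (ℓ + m')) x w * B w c)
        (fun w _ => mul_nonneg (pow_entry_nonneg hB _ x w) (hB w c)) (Finset.mem_univ b)
    nlinarith

variable (k H) in
noncomputable def surv (t : ℝ) (x : K) : ℝ := ∑ y ∈ H, exp (t • genH k H) x y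

section surv
variable (hk : ∀ x y : K, x ≠ y → 0 ≤ k x y)
include hk

lemma surv_nonneg {t : ℝ} (ht : 0 ≤ t) (x : K) : 0 ≤ surv k H t x :=
  Finset.sum_nonneg fun y _ => exp_genH_nonneg hk ht x y

lemma surv_le_one {t : ℝ} (ht : 0 ≤ t) (x : K) : surv k H t x ≤ 1 := by
  have h1 := exp_genH_row_sum (k := k) (H := H) t x
  calc surv k H t x ≤ ∑ y, exp (t • genH k H) x y :=
        Finset.sum_le_sum_of_subset_of_nonneg (Finset.subset_univ H)
          (fun y _ _ => exp_genH_nonneg hk ht x y)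
    _ = 1 := h1

omit hk in
lemma surv_notMem (t : ℝ) {x : K} (hx : x ∉ H) : surv k H t x = 0 := by
  refine Finset.sum_eq_zero fun y hy => ?_
  rw [exp_row_notMem t hx y, if_neg]
  rintro rfl; exact hx hy

lemma surv_submul {t u : ℝ} (ht : 0 ≤ t) (hu : 0 ≤ u) {θ : ℝ} (hθ : 0 ≤ θ)
    (hbound : ∀ z, surv k H u z ≤ θ) (x : K) :
    surv k H (t + u) x ≤ θ * surv k H t x := by
  have hadd : exp ((t + u) • genH k H)
      = exp (t • genH k H) * exp (u • genH k H) := by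
    rw [add_smul]
    exact Matrix.exp_add_of_commute _ _ (((Commute.refl _).smul_left t).smul_right u)
  have hswap : surv k H (t + u) x
      = ∑ z, exp (t • genH k H) x z * surv k H u z := by
    simp only [surv, hadd, Matrix.mul_apply]
    rw [Finset.sum_comm]
    simp [Finset.mul_sum]
  rw [hswap]
  have hsplit : ∑ z, exp (t • genH k H) x z * surv k H u z
      = ∑ z ∈ H, exp (t • genH k H) x z * surv k H u z := by
    symm
    apply Finset.sum_subset (Finset.subset_univ H)
    intro z _ hz
    rw [surv_notMem _ hz, mul_zero]
  rw [hsplit]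
  calc ∑ z ∈ H, exp (t • genH k H) x z * surv k H u z
      ≤ ∑ z ∈ H, exp (t • genH k H) x z * θ :=
        Finset.sum_le_sum fun z _ => mul_le_mul_of_nonneg_left (hbound z)
          (exp_genH_nonneg hk ht x z)
    _ = θ * surv k H t x := by rw [← Finset.sum_mul, mul_comm]; rfl

variable (hirr : StronglyConnected k) (hHproper : H ≠ Finset.univ)
include hirr hHproper

lemma surv_lt_one {t : ℝ} (ht : 0 < t) (x : K) : surv k H t x < 1 := by
  by_cases hx : x ∈ H
  · -- find exit point
    have hz0 : ∃ z0, z0 ∉ H := by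
      by_contra h
      push_neg at h
      exact hHproper (Finset.eq_univ_iff_forall.mpr h)
    obtain ⟨z0, hz0⟩ := hz0
    have hreach : ∃ z ∉ H, Relation.ReflTransGen (fun a b => 0 < NM k H a b) x z := by
      have hpath := hirr x z0
      clear hx
      induction hpath using Relation.ReflTransGen.head_induction_on with
      | refl => exact ⟨z0, hz0, Relation.ReflTransGen.refl⟩
      | @head a b hab _ ih =>
        by_cases ha : a ∈ H
        · obtain ⟨z, hz, hwalk⟩ := ih
          refine ⟨z, hz, Relation.ReflTransGen.head ?_ hwalk⟩
          by_cases hab' : a = b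
          · subst hab'; exact NM_diag_pos hk a
          · rw [NM_offdiag ha hab']; exact hab
        · exact ⟨a, ha, Relation.ReflTransGen.refl⟩
    obtain ⟨z, hz, hwalk⟩ := hreach
    obtain ⟨ℓ, hℓ⟩ := pow_pos_of_walk (NM_nonneg hk) (NM_diag_pos hk) hwalk
    have hpos : 0 < exp (t • genH k H) x z :=
      exp_genH_entry_pos hk ht (hℓ ℓ le_rfl)
    have hsub : H ⊆ Finset.univ.erase z := by
      intro y hy
      refine Finset.mem_erase.mpr ⟨?_, Finset.mem_univ y⟩
      rintro rfl; exact hz hy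
    have h1 : surv k H t x ≤ ∑ y ∈ Finset.univ.erase z, exp (t • genH k H) x y :=
      Finset.sum_le_sum_of_subset_of_nonneg hsub fun y _ _ => exp_genH_nonneg hk ht.le x y
    have h2 : exp (t • genH k H) x z + ∑ y ∈ Finset.univ.erase z, exp (t • genH k H) x y
        = 1 := by
      rw [Finset.add_sum_erase _ _ (Finset.mem_univ z)]
      exact exp_genH_row_sum t x
    linarith
  · rw [surv_notMem _ hx]; norm_num

end surv

section decay
variable (hk : ∀ x y : K, x ≠ y → 0 ≤ k x y)
include hk

lemma mulVec_abs_le {v : K → ℝ} (hv : ∀ y ∉ H, v y = 0) (x : K) {t : ℝ} (ht : 0 ≤ t) :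
    |(exp (t • genH k H)).mulVec v x| ≤ (∑ y, |v y|) * surv k H t x := by
  have hrw : (exp (t • genH k H)).mulVec v x
      = ∑ y ∈ H, exp (t • genH k H) x y * v y := by
    rw [Matrix.mulVec, dotProduct]
    symm
    apply Finset.sum_subset (Finset.subset_univ H)
    intro z _ hz
    rw [hv z hz, mul_zero]
  rw [hrw]
  calc |∑ y ∈ H, exp (t • genH k H) x y * v y|
      ≤ ∑ y ∈ H, |exp (t • genH k H) x y * v y| := Finset.abs_sum_le_sum_abs _ _
    _ ≤ ∑ y ∈ H, surv k H t x * |v y| := by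
        refine Finset.sum_le_sum fun y hy => ?_
        rw [abs_mul, abs_of_nonneg (exp_genH_nonneg hk ht x y)]
        refine mul_le_mul_of_nonneg_right ?_ (abs_nonneg _)
        exact Finset.single_le_sum (f := fun y => exp (t • genH k H) x y)
          (fun z _ => exp_genH_nonneg hk ht x z) hy
    _ = surv k H t x * ∑ y ∈ H, |v y| := by rw [Finset.mul_sum]
    _ ≤ (∑ y, |v y|) * surv k H t x := by
        rw [mul_comm]
        refine mul_le_mul_of_nonneg_right ?_ ?_
        · exact Finset.sum_le_sum_of_subset_of_nonneg (Finset.subset_univ H)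
            fun y _ _ => abs_nonneg _
        · exact surv_nonneg hk ht x

variable (hirr : StronglyConnected k) (hHproper : H ≠ Finset.univ)
include hirr hHproper

lemma surv_exp_decay (hne : H.Nonempty) :
    ∃ C lam : ℝ, 0 < C ∧ 0 < lam ∧
      ∀ x, ∀ t : ℝ, 0 ≤ t → surv k H t x ≤ C * Real.exp (-(lam * t)) := by
  obtain ⟨x0, hx0⟩ := hne
  have hU : (Finset.univ : Finset K).Nonempty := ⟨x0, Finset.mem_univ x0⟩
  set θ := Finset.univ.sup' hU (fun x => surv k H 1 x) with hθdef
  have hθlt : θ < 1 := by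
    rw [hθdef, Finset.sup'_lt_iff]
    exact fun x _ => surv_lt_one hk hirr hHproper one_pos x
  have hθpos : 0 < θ := by
    have h1 : 0 < surv k H 1 x0 := by
      have hdiag := exp_genH_diag_pos (H := H) hk (t := 1) zero_le_one x0
      have : exp ((1:ℝ) • genH k H) x0 x0 ≤ surv k H 1 x0 :=
        Finset.single_le_sum (f := fun y => exp ((1:ℝ) • genH k H) x0 y)
          (fun z _ => exp_genH_nonneg hk zero_le_one x0 z) hx0
      linarith
    exact lt_of_lt_of_le h1 (Finset.le_sup' _ (Finset.mem_univ x0))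
  have hθbound : ∀ z, surv k H 1 z ≤ θ := fun z => Finset.le_sup' _ (Finset.mem_univ z)
  have hstep : ∀ (n : ℕ) (r : ℝ), 0 ≤ r → ∀ x, surv k H (r + n) x ≤ θ ^ n := by
    intro n
    induction n with
    | zero => intro r hr x; simpa using surv_le_one hk hr x
    | succ n ih =>
      intro r hr x
      have heq : r + ((n:ℝ) + 1) = (r + n) + 1 := by ring
      push_cast
      rw [heq]
      calc surv k H ((r + n) + 1) x ≤ θ * surv k H (r + n) x :=
            surv_submul hk (by positivity) zero_le_one hθpos.le hθbound x
        _ ≤ θ * θ ^ n := mul_le_mul_of_nonneg_left (ih r hr x) hθpos.le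
        _ = θ ^ (n + 1) := by ring
  refine ⟨Real.exp (-Real.log θ), -Real.log θ, Real.exp_pos _,
    neg_pos.mpr (Real.log_neg hθpos hθlt), ?_⟩
  intro x t ht
  set n := ⌊t⌋₊ with hn
  have h1 : surv k H t x ≤ θ ^ n := by
    have hr : (0:ℝ) ≤ t - n := sub_nonneg.mpr (Nat.floor_le ht)
    have := hstep n (t - n) hr x
    simpa using this
  have h2 : θ ^ n ≤ Real.exp (-Real.log θ) * Real.exp (-(-Real.log θ * t)) := by
    have hlog : Real.log θ < 0 := Real.log_neg hθpos hθlt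
    have hpow : (θ:ℝ) ^ n = Real.exp ((n:ℝ) * Real.log θ) := by
      rw [Real.exp_nat_mul, Real.exp_log hθpos]
    rw [hpow, ← Real.exp_add]
    apply Real.exp_le_exp.mpr
    have hnt : t - 1 ≤ (n:ℝ) := by
      have := Nat.lt_floor_add_one t
      push_cast at this ⊢
      linarith
    nlinarith
  linarith
end decay

noncomputable def mulVecCLM (v : K → ℝ) (x : K) : Matrix K K ℝ →L[ℝ] ℝ :=
  { toLinearMap :=
    { toFun := fun M => M.mulVec v x
      map_add' := fun M N => congrFun (Matrix.add_mulVec M N v) x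
      map_smul' := fun c M => congrFun (Matrix.smul_mulVec c M v) x }
    cont := (continuous_apply x).comp (Continuous.matrix_mulVec continuous_id continuous_const) }

lemma cont_Phi (v : K → ℝ) (x : K) :
    Continuous fun t : ℝ => (exp (t • genH k H)).mulVec v x := by
  have hexp : Continuous fun t : ℝ => exp (t • genH k H) :=
    exp_continuous.comp (continuous_id.smul continuous_const)
  exact (mulVecCLM v x).continuous.comp hexp

lemma hasDerivAt_Phi (v : K → ℝ) (x : K) (t : ℝ) :
    HasDerivAt (fun u : ℝ => (exp (u • genH k H)).mulVec v x)
      ((genH k H * exp (t • genH k H)).mulVec v x) t := by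
  have hder := hasDerivAt_exp_smul_const' (𝕂 := ℝ) (genH k H) t
  exact (mulVecCLM v x).hasFDerivAt.comp_hasDerivAt t hder

omit [DecidableEq K] in
lemma genH_mulVec_supported (w : K → ℝ) {x : K} (hx : x ∉ H) [DecidableEq K] :
    (genH k H).mulVec w x = 0 := by
  simp [Matrix.mulVec, dotProduct, genH, hx]

section analytic
variable (hk : ∀ x y : K, x ≠ y → 0 ≤ k x y)
  (hirr : StronglyConnected k) (hHproper : H ≠ Finset.univ) (hne : H.Nonempty)
include hk hirr hHproper hne

lemma integrableOn_Phi {v : K → ℝ} (hv : ∀ y ∉ H, v y = 0) (x : K) :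
    IntegrableOn (fun t : ℝ => (exp (t • genH k H)).mulVec v x) (Set.Ioi 0) := by
  obtain ⟨C, lam, hC, hlam, hbound⟩ := surv_exp_decay hk hirr hHproper hne
  refine Integrable.mono'
    (g := fun t : ℝ => ((∑ y, |v y|) * C) * Real.exp (-lam * t)) ?_ ?_ ?_
  · exact ((exp_neg_integrableOn_Ioi 0 hlam).const_mul _)
  · exact ((cont_Phi v x).aestronglyMeasurable).restrict
  · rw [MeasureTheory.ae_restrict_iff' measurableSet_Ioi]
    filter_upwards with t ht
    have ht' : (0:ℝ) ≤ t := le_of_lt ht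
    have h1 := mulVec_abs_le hk hv x ht'
    have h2 := hbound x t ht'
    have h3 : 0 ≤ ∑ y, |v y| := Finset.sum_nonneg fun y _ => abs_nonneg _
    have := mul_le_mul_of_nonneg_left h2 h3
    rw [Real.norm_eq_abs]
    calc |(exp (t • genH k H)).mulVec v x| ≤ (∑ y, |v y|) * surv k H t x := h1
      _ ≤ (∑ y, |v y|) * (C * Real.exp (-(lam * t))) := this
      _ = ((∑ y, |v y|) * C) * Real.exp (-lam * t) := by ring_nf

lemma tendsto_Phi_zero {v : K → ℝ} (hv : ∀ y ∉ H, v y = 0) (x : K) :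
    Filter.Tendsto (fun t : ℝ => (exp (t • genH k H)).mulVec v x)
      Filter.atTop (nhds 0) := by
  obtain ⟨C, lam, hC, hlam, hbound⟩ := surv_exp_decay hk hirr hHproper hne
  have hbnd : ∀ᶠ t : ℝ in Filter.atTop,
      ‖(exp (t • genH k H)).mulVec v x‖ ≤ ((∑ y, |v y|) * C) * Real.exp (-(lam * t)) := by
    filter_upwards [Filter.eventually_ge_atTop (0:ℝ)] with t ht
    have h1 := mulVec_abs_le hk hv x ht
    have h2 := hbound x t ht
    have h3 : 0 ≤ ∑ y, |v y| := Finset.sum_nonneg fun y _ => abs_nonneg _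
    have := mul_le_mul_of_nonneg_left h2 h3
    rw [Real.norm_eq_abs]
    calc |(exp (t • genH k H)).mulVec v x| ≤ (∑ y, |v y|) * surv k H t x := h1
      _ ≤ (∑ y, |v y|) * (C * Real.exp (-(lam * t))) := this
      _ = ((∑ y, |v y|) * C) * Real.exp (-(lam * t)) := by ring
  refine squeeze_zero_norm' hbnd ?_
  have h0 : Filter.Tendsto (fun t : ℝ => Real.exp (-(lam * t))) Filter.atTop (nhds 0) := by
      apply Real.tendsto_exp_neg_atTop_nhds_zero.comp
      exact Filter.Tendsto.const_mul_atTop hlam Filter.tendsto_id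
  simpa using h0.const_mul ((∑ y, |v y|) * C)

lemma deriv_integrableOn {v : K → ℝ} (hv : ∀ y ∉ H, v y = 0) (x : K) :
    IntegrableOn (fun t : ℝ => (genH k H * exp (t • genH k H)).mulVec v x)
      (Set.Ioi 0) := by
  have hcomm : ∀ t : ℝ, genH k H * exp (t • genH k H)
      = exp (t • genH k H) * genH k H := fun t =>
    (((Commute.refl (genH k H)).smul_left t).exp_left).symm.eq
  have heq : ∀ t : ℝ, (genH k H * exp (t • genH k H)).mulVec v x
      = (exp (t • genH k H)).mulVec ((genH k H).mulVec v) x := by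
    intro t
    rw [hcomm t, ← Matrix.mulVec_mulVec]
  simp only [heq]
  exact integrableOn_Phi hk hirr hHproper hne
    (fun y hy => genH_mulVec_supported v hy) x

lemma integral_deriv_Phi {v : K → ℝ} (hv : ∀ y ∉ H, v y = 0) (x : K) :
    ∫ t in Set.Ioi (0:ℝ), (genH k H * exp (t • genH k H)).mulVec v x = - v x := by
  have h := integral_Ioi_of_hasDerivAt_of_tendsto
    (f := fun t : ℝ => (exp (t • genH k H)).mulVec v x)
    (f' := fun t : ℝ => (genH k H * exp (t • genH k H)).mulVec v x)
    ((cont_Phi v x).continuousWithinAt)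
    (fun t _ => hasDerivAt_Phi v x t)
    (deriv_integrableOn hk hirr hHproper hne hv x)
    (tendsto_Phi_zero hk hirr hHproper hne hv x)
  rw [h]
  simp [exp_zero]

end analytic

lemma sum_rate_eq_mulVec {W : K → ℝ} {x : K} (hx : x ∈ H) :
    ∑ y, k x y * (W y - W x) = (genH k H).mulVec W x := by
  have hR : (genH k H).mulVec W x = ∑ y, gen k x y * W y := by
    simp only [Matrix.mulVec, dotProduct, genH, Matrix.of_apply, hx, if_true]
  rw [hR, ← Finset.add_sum_erase Finset.univ (fun y => gen k x y * W y) (Finset.mem_univ x)]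
  have h1 : gen k x x = -∑ z ∈ Finset.univ.erase x, k x z := by simp [gen]
  have h2 : ∑ y ∈ Finset.univ.erase x, gen k x y * W y
      = ∑ y ∈ Finset.univ.erase x, k x y * W y := by
    refine Finset.sum_congr rfl fun y hy => ?_
    have hxy : x ≠ y := fun h => (Finset.mem_erase.mp hy).1 h.symm
    simp [gen, hxy]
  have h3 : ∑ y, k x y * (W y - W x) = ∑ y ∈ Finset.univ.erase x, k x y * (W y - W x) := by
    symm
    apply Finset.sum_subset (Finset.subset_univ _)
    intro z _ hz
    have : z = x := by
      by_contra hzx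
      exact hz (Finset.mem_erase.mpr ⟨hzx, Finset.mem_univ z⟩)
    subst this; ring
  rw [h3, h1, h2]
  have : ∑ y ∈ Finset.univ.erase x, k x y * (W y - W x)
      = ∑ y ∈ Finset.univ.erase x, (k x y * W y - k x y * W x) := by
    refine Finset.sum_congr rfl fun y _ => by ring
  rw [this, Finset.sum_sub_distrib, ← Finset.sum_mul]
  ring

section maxprin
variable (hk : ∀ x y : K, x ≠ y → 0 ≤ k x y)
  (hirr : StronglyConnected k) (hHproper : H ≠ Finset.univ)
include hk hirr hHproper

lemma max_principle {W : K → ℝ} (hW1 : ∀ x ∈ H, ∑ y, k x y * (W y - W x) = 0)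
    (hW0 : ∀ x ∉ H, W x = 0) : ∀ x, W x ≤ 0 := by
  by_contra hcon
  push_neg at hcon
  obtain ⟨x1, hx1⟩ := hcon
  have hU : (Finset.univ : Finset K).Nonempty := ⟨x1, Finset.mem_univ x1⟩
  obtain ⟨x0, -, hmax⟩ := Finset.exists_mem_eq_sup' hU W
  set M := Finset.univ.sup' hU W with hMdef
  have hMle : ∀ y, W y ≤ M := fun y => Finset.le_sup' W (Finset.mem_univ y)
  have hMpos : 0 < M := lt_of_lt_of_le hx1 (hMle x1)
  obtain ⟨z0, hz0⟩ : ∃ z0, z0 ∉ H := by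
    by_contra h
    push_neg at h
    exact hHproper (Finset.eq_univ_iff_forall.mpr h)
  have hclaim : ∀ y, Relation.ReflTransGen (fun a b => 0 < k a b) x0 y → W y = M := by
    intro y hy
    induction hy with
    | refl => exact hmax.symm
    | @tail b c hb hbc ih =>
      have hbH : b ∈ H := by
        by_contra hbH
        rw [hW0 b hbH] at ih
        linarith
      have hsum := hW1 b hbH
      rw [ih] at hsum
      have hnonpos : ∀ y ∈ Finset.univ, k b y * (W y - M) ≤ 0 := by
        intro y _
        by_cases hyb : y = b
        · subst hyb; rw [ih]; ring_nf; simp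
        · have : b ≠ y := fun h => hyb h.symm
          exact mul_nonpos_of_nonneg_of_nonpos (hk b y this) (by linarith [hMle y])
      have hzero := (Finset.sum_eq_zero_iff_of_nonpos hnonpos).mp hsum c (Finset.mem_univ c)
      have : W c - M = 0 := by
        rcases mul_eq_zero.mp hzero with h | h
        · exact absurd h (ne_of_gt hbc)
        · exact h
      linarith
  have := hclaim z0 (hirr x0 z0)
  rw [hW0 z0 hz0] at this
  linarith

end maxprin

section poisson
variable (hk : ∀ x y : K, x ≠ y → 0 ≤ k x y)
  (hirr : StronglyConnected k) (hHproper : H ≠ Finset.univ) (hne : H.Nonempty)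
include hk hirr hHproper hne

lemma genH_mulVec_integral {v : K → ℝ} (hv : ∀ y ∉ H, v y = 0) (x : K) :
    (genH k H).mulVec
      (fun y => ∫ t in Set.Ioi (0:ℝ), (exp (t • genH k H)).mulVec v y) x = - v x := by
  have hInt : ∀ y : K, IntegrableOn
      (fun t : ℝ => (exp (t • genH k H)).mulVec v y) (Set.Ioi 0) :=
    fun y => integrableOn_Phi hk hirr hHproper hne hv y
  have h1 : (genH k H).mulVec
      (fun y => ∫ t in Set.Ioi (0:ℝ), (exp (t • genH k H)).mulVec v y) x
      = ∑ y, genH k H x y * ∫ t in Set.Ioi (0:ℝ), (exp (t • genH k H)).mulVec v y := by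
    simp [Matrix.mulVec, dotProduct]
  rw [h1]
  have h2 : ∀ y : K, genH k H x y * ∫ t in Set.Ioi (0:ℝ), (exp (t • genH k H)).mulVec v y
      = ∫ t in Set.Ioi (0:ℝ), genH k H x y * (exp (t • genH k H)).mulVec v y :=
    fun y => (MeasureTheory.integral_const_mul _ _).symm
  simp_rw [h2]
  rw [← MeasureTheory.integral_finset_sum _ (fun y _ => (hInt y).const_mul _)]
  have h3 : ∀ t : ℝ, ∑ y, genH k H x y * (exp (t • genH k H)).mulVec v y
      = (genH k H * exp (t • genH k H)).mulVec v x := by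
    intro t
    rw [← Matrix.mulVec_mulVec]
    simp [Matrix.mulVec, dotProduct]
  simp_rw [h3]
  exact integral_deriv_Phi hk hirr hHproper hne hv x

omit hk hirr hHproper hne in
lemma Phi_notMem {v : K → ℝ} (hv : ∀ y ∉ H, v y = 0) {x : K} (hx : x ∉ H) (t : ℝ) :
    (exp (t • genH k H)).mulVec v x = 0 := by
  have : ∀ y, exp (t • genH k H) x y = if x = y then 1 else 0 :=
    fun y => exp_row_notMem t hx y
  simp only [Matrix.mulVec, dotProduct, this]
  rw [Finset.sum_eq_single x]
  · simpa using hv x hx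
  · intro b _ hb; rw [if_neg (fun h => hb h.symm), zero_mul]
  · intro h; exact absurd (Finset.mem_univ x) h

end poisson


end StoppedAux

open NormedSpace MeasureTheory in
/-- For a nonempty proper subset `H ⊊ K`, the stopped accumulation
`V_H(x) = ∫₀^∞ (e^{t L_H} f_H)(x) dt` converges, and `V_H` is the unique function with
`L V_H + f = 0` on `H` and `V_H = 0` outside `H`. -/
theorem stopped_accumulation_solves_poisson
    {K : Type*} [Fintype K] [DecidableEq K]
    (k : K → K → ℝ) (hk : ∀ x y : K, x ≠ y → 0 ≤ k x y)
    (hirr : StronglyConnected k)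
    (H : Finset K) (hH : H.Nonempty) (hHproper : H ≠ Finset.univ)
    (f : K → ℝ) (V : K → ℝ)
    (hV : ∀ x, V x = ∫ t in Set.Ioi (0 : ℝ),
        (NormedSpace.exp (t • genH k H)).mulVec (fun y => if y ∈ H then f y else 0) x) :
    (∀ x, MeasureTheory.IntegrableOn
        (fun t : ℝ => (NormedSpace.exp (t • genH k H)).mulVec
          (fun y => if y ∈ H then f y else 0) x) (Set.Ioi 0)) ∧
    (∀ x ∈ H, (∑ y, k x y * (V y - V x)) + f x = 0) ∧
    (∀ x ∉ H, V x = 0) ∧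
    (∀ U : K → ℝ,
      (∀ x ∈ H, (∑ y, k x y * (U y - U x)) + f x = 0) → (∀ x ∉ H, U x = 0) → U = V) := by
  classical
  set v : K → ℝ := fun y => if y ∈ H then f y else 0 with hvdef
  have hvsupp : ∀ y ∉ H, v y = 0 := fun y hy => by simp [hvdef, hy]
  have hVfun : V = fun y => ∫ t in Set.Ioi (0:ℝ), (exp (t • genH k H)).mulVec v y :=
    funext fun y => hV y
  have part1 : ∀ x, MeasureTheory.IntegrableOn
      (fun t : ℝ => (exp (t • genH k H)).mulVec v x) (Set.Ioi 0) :=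
    fun x => integrableOn_Phi hk hirr hHproper hH hvsupp x
  have part2 : ∀ x ∈ H, (∑ y, k x y * (V y - V x)) + f x = 0 := by
    intro x hx
    have hpois := genH_mulVec_integral hk hirr hHproper hH hvsupp x
    rw [sum_rate_eq_mulVec hx, hVfun, hpois]
    simp [hvdef, hx]
  have part3 : ∀ x ∉ H, V x = 0 := by
    intro x hx
    rw [hV x]
    have h0 : ∀ t : ℝ, (exp (t • genH k H)).mulVec v x = 0 :=
      fun t => Phi_notMem hvsupp hx t
    simp [h0]
  refine ⟨part1, part2, part3, ?_⟩
  intro U hU1 hU0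
  set W : K → ℝ := fun y => U y - V y with hWdef
  have hW1 : ∀ x ∈ H, ∑ y, k x y * (W y - W x) = 0 := by
    intro x hx
    have e1 := hU1 x hx
    have e2 := part2 x hx
    have hsplit : ∑ y, k x y * (W y - W x)
        = (∑ y, k x y * (U y - U x)) - (∑ y, k x y * (V y - V x)) := by
      rw [← Finset.sum_sub_distrib]
      refine Finset.sum_congr rfl fun y _ => ?_
      simp only [hWdef]; ring
    rw [hsplit]; linarith
  have hW0 : ∀ x ∉ H, W x = 0 := by
    intro x hx
    simp only [hWdef, hU0 x hx, part3 x hx, sub_zero]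
  have hle := max_principle hk hirr hHproper hW1 hW0
  have hW1' : ∀ x ∈ H, ∑ y, k x y * ((-W) y - (-W) x) = 0 := by
    intro x hx
    have := hW1 x hx
    have hswap : ∑ y, k x y * ((-W) y - (-W) x) = -∑ y, k x y * (W y - W x) := by
      rw [← Finset.sum_neg_distrib]
      refine Finset.sum_congr rfl fun y _ => ?_
      simp only [Pi.neg_apply]; ring
    rw [hswap, this, neg_zero]
  have hW0' : ∀ x ∉ H, (-W) x = 0 := fun x hx => by
    simp [hW0 x hx]
  have hge := max_principle hk hirr hHproper hW1' hW0'
  funext x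
  have h1 := hle x
  have h2 := hge x
  simp only [Pi.neg_apply, hWdef] at h1 h2
  linarith
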